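/- Let a, b : ℝ → ℝ be continuously differentiable functions with (sup_{y∈ℝ} |a'(y)|) · (sup_{x∈ℝ} |b'(x)|) ≤ 1/2, and define Φ : ℝ² → ℝ² by Φ(x,y) = (x + a(y), y + b(x)). Then Φ is injective, the Jacobian determinant satisfies |det DΦ(x,y)| = |1 − a'(y) b'(x)| ≥ 1/2 at every point, and for every measurable ψ : ℝ² → [0,∞], ∫_{ℝ²} ψ(Φ(x,y)) dx dy ≤ 2 ∫_{ℝ²} ψ(u,v) du dv; in particular, for every ψ ∈ L²(ℝ²), ∫_{ℝ²} |ψ(Φ(x,y))|² dx dy ≤ 2 ‖ψ‖²_{L²(ℝ²)}. (Change-of-variables estimate used in the proof of Lemma 3.2.) -/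

import Mathlib

open MeasureTheory
open scoped ENNReal NNReal

noncomputable section

/-- **Change-of-variables estimate (proof of Lemma 3.2).** If `a, b : ℝ → ℝ` are `C¹`
with `(sup |a'|)·(sup |b'|) ≤ 1/2` and `Φ(x,y) = (x + a(y), y + b(x))`, then `Φ` is
injective, `|det DΦ(x,y)| = |1 − a'(y)b'(x)| ≥ 1/2` everywhere, `∫ ψ∘Φ ≤ 2 ∫ ψ` for
every measurable `ψ : ℝ² → [0,∞]`, and `∫ |ψ∘Φ|² ≤ 2‖ψ‖²_{L²}` for every `ψ ∈ L²(ℝ²)`. -/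
theorem change_of_variables_estimate (a b : ℝ → ℝ)
    (ha : ContDiff ℝ 1 a) (hb : ContDiff ℝ 1 b)
    (Ka Kb : ℝ) (hKa : ∀ y, |deriv a y| ≤ Ka) (hKb : ∀ x, |deriv b x| ≤ Kb)
    (hK : Ka * Kb ≤ 1 / 2)
    (Φ : ℝ × ℝ → ℝ × ℝ) (hΦ : ∀ p, Φ p = (p.1 + a p.2, p.2 + b p.1)) :
    Function.Injective Φ ∧
    (∀ p : ℝ × ℝ,
      |LinearMap.det ((fderiv ℝ Φ p : (ℝ × ℝ) →L[ℝ] (ℝ × ℝ)) : (ℝ × ℝ) →ₗ[ℝ] (ℝ × ℝ))|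
          = |1 - deriv a p.2 * deriv b p.1| ∧
        (1:ℝ) / 2 ≤ |1 - deriv a p.2 * deriv b p.1|) ∧
    (∀ ψ : ℝ × ℝ → ℝ≥0∞, Measurable ψ →
      ∫⁻ p, ψ (Φ p) ∂(volume : Measure (ℝ × ℝ)) ≤ 2 * ∫⁻ p, ψ p ∂(volume : Measure (ℝ × ℝ))) ∧
    (∀ ψ : ℝ × ℝ → ℝ, MemLp ψ 2 (volume : Measure (ℝ × ℝ)) →
      ∫⁻ p, (‖ψ (Φ p)‖₊ : ℝ≥0∞) ^ 2 ∂(volume : Measure (ℝ × ℝ)) ≤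
        2 * eLpNorm ψ 2 (volume : Measure (ℝ × ℝ)) ^ 2) := by
  have hda : Differentiable ℝ a := ha.differentiable one_ne_zero
  have hdb : Differentiable ℝ b := hb.differentiable one_ne_zero
  -- Lipschitz bounds
  have hlipa : ∀ y z : ℝ, |a y - a z| ≤ Ka * |y - z| := by
    intro y z
    have := convex_univ.norm_image_sub_le_of_norm_deriv_le (f := a)
      (fun x _ => hda x) (fun x _ => hKa x) (Set.mem_univ z) (Set.mem_univ y)
    simpa [Real.norm_eq_abs] using this
  have hlipb : ∀ y z : ℝ, |b y - b z| ≤ Kb * |y - z| := by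
    intro y z
    have := convex_univ.norm_image_sub_le_of_norm_deriv_le (f := b)
      (fun x _ => hdb x) (fun x _ => hKb x) (Set.mem_univ z) (Set.mem_univ y)
    simpa [Real.norm_eq_abs] using this
  -- Injectivity
  have hinj : Function.Injective Φ := by
    intro p q hpq
    rw [hΦ p, hΦ q, Prod.mk.injEq] at hpq
    obtain ⟨h1, h2⟩ := hpq
    have e1 : |p.1 - q.1| ≤ Ka * |p.2 - q.2| := by
      have : p.1 - q.1 = a q.2 - a p.2 := by linarith
      rw [this]
      simpa [abs_sub_comm (p.2) (q.2)] using hlipa q.2 p.2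
    have e2 : |p.2 - q.2| ≤ Kb * |p.1 - q.1| := by
      have : p.2 - q.2 = b q.1 - b p.1 := by linarith
      rw [this]
      simpa [abs_sub_comm (p.1) (q.1)] using hlipb q.1 p.1
    have hKa0 : 0 ≤ Ka := le_trans (abs_nonneg _) (hKa 0)
    have h11 : p.1 = q.1 := by
      have : |p.1 - q.1| ≤ Ka * (Kb * |p.1 - q.1|) :=
        le_trans e1 (by exact mul_le_mul_of_nonneg_left e2 hKa0)
      have h0 : 0 ≤ |p.1 - q.1| := abs_nonneg _
      have : |p.1 - q.1| = 0 := by nlinarith [abs_nonneg (p.1 - q.1)]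
      have := abs_eq_zero.mp this; linarith
    have h22 : p.2 = q.2 := by
      have : b p.1 = b q.1 := by rw [h11]
      linarith
    exact Prod.ext h11 h22
  -- the derivative
  set L : ℝ × ℝ → (ℝ × ℝ) →L[ℝ] (ℝ × ℝ) := fun p =>
    ((ContinuousLinearMap.fst ℝ ℝ ℝ) + (deriv a p.2) • (ContinuousLinearMap.snd ℝ ℝ ℝ)).prod
      ((ContinuousLinearMap.snd ℝ ℝ ℝ) + (deriv b p.1) • (ContinuousLinearMap.fst ℝ ℝ ℝ)) with hL
  have hΦeq : Φ = fun p => (p.1 + a p.2, p.2 + b p.1) := funext hΦ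
  have hfd : ∀ p : ℝ × ℝ, HasFDerivAt Φ (L p) p := by
    intro p
    rw [hΦeq, hL]
    exact (hasFDerivAt_fst.add
        ((hda p.2).hasDerivAt.comp_hasFDerivAt p (hasFDerivAt_snd (p := p)))).prodMk
      (hasFDerivAt_snd.add ((hdb p.1).hasDerivAt.comp_hasFDerivAt p (hasFDerivAt_fst (p := p))))
  have hdet : ∀ p : ℝ × ℝ,
      LinearMap.det ((L p : (ℝ × ℝ) →L[ℝ] (ℝ × ℝ)) : (ℝ × ℝ) →ₗ[ℝ] (ℝ × ℝ))
        = 1 - deriv a p.2 * deriv b p.1 := by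
    intro p
    rw [← LinearMap.det_toMatrix (Module.Basis.finTwoProd ℝ), Matrix.det_fin_two]
    simp [LinearMap.toMatrix_apply, hL, Module.Basis.finTwoProd, ContinuousLinearMap.prod_apply]
  have hdet_lb : ∀ p : ℝ × ℝ, (1:ℝ) / 2 ≤ |1 - deriv a p.2 * deriv b p.1| := by
    intro p
    have h1 : |deriv a p.2 * deriv b p.1| ≤ Ka * Kb := by
      rw [abs_mul]
      exact mul_le_mul (hKa p.2) (hKb p.1) (abs_nonneg _)
        (le_trans (abs_nonneg _) (hKa 0))
    have := abs_sub_abs_le_abs_sub (1 : ℝ) (deriv a p.2 * deriv b p.1)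
    have h2 : |(1:ℝ)| = 1 := abs_one
    calc (1:ℝ)/2 = 1 - 1/2 := by ring
      _ ≤ 1 - |deriv a p.2 * deriv b p.1| := by linarith
      _ ≤ |1 - deriv a p.2 * deriv b p.1| := by
          have := abs_sub_abs_le_abs_sub (1 : ℝ) (deriv a p.2 * deriv b p.1)
          simpa [abs_one] using this
  -- master change-of-variables bound (for arbitrary g)
  have hmain : ∀ g : ℝ × ℝ → ℝ≥0∞,
      ∫⁻ p, g (Φ p) ∂(volume : Measure (ℝ × ℝ)) ≤ 2 * ∫⁻ p, g p ∂(volume : Measure (ℝ × ℝ)) := by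
    intro g
    have hcov := lintegral_image_eq_lintegral_abs_det_fderiv_mul
      (volume : Measure (ℝ × ℝ)) MeasurableSet.univ
      (f := Φ) (f' := L)
      (fun x _ => (hfd x).hasFDerivWithinAt) (hinj.injOn) g
    rw [Measure.restrict_univ] at hcov
    have hgle : ∀ p, g (Φ p) ≤ 2 * (ENNReal.ofReal |(L p).det| * g (Φ p)) := by
      intro p
      have hd : (1:ℝ)/2 ≤ |(L p).det| := by
        rw [show ((L p).det : ℝ) = LinearMap.det ((L p : (ℝ × ℝ) →L[ℝ] (ℝ × ℝ)) :
          (ℝ × ℝ) →ₗ[ℝ] (ℝ × ℝ)) from rfl, hdet p]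
        exact hdet_lb p
      have : (2 : ℝ≥0∞)⁻¹ ≤ ENNReal.ofReal |(L p).det| := by
        rw [show ((2:ℝ≥0∞)⁻¹) = ENNReal.ofReal (1/2) by
          rw [ENNReal.ofReal_div_of_pos (by norm_num)]; simp]
        exact ENNReal.ofReal_le_ofReal hd
      calc g (Φ p) = 2 * ((2:ℝ≥0∞)⁻¹ * g (Φ p)) := by
            rw [← mul_assoc, ENNReal.mul_inv_cancel (by norm_num) (by norm_num), one_mul]
        _ ≤ 2 * (ENNReal.ofReal |(L p).det| * g (Φ p)) := by
            gcongr
    calc ∫⁻ p, g (Φ p) ≤ ∫⁻ p, 2 * (ENNReal.ofReal |(L p).det| * g (Φ p)) :=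
          lintegral_mono hgle
      _ = 2 * ∫⁻ p, ENNReal.ofReal |(L p).det| * g (Φ p) := lintegral_const_mul' _ _ (by norm_num)
      _ = 2 * ∫⁻ x in Φ '' Set.univ, g x := by rw [← hcov]
      _ ≤ 2 * ∫⁻ p, g p := by
          gcongr
          exact Measure.restrict_le_self
  refine ⟨hinj, ?_, fun ψ _ => hmain ψ, ?_⟩
  · intro p
    have : fderiv ℝ Φ p = L p := (hfd p).fderiv
    rw [this, hdet p]
    exact ⟨rfl, hdet_lb p⟩
  · intro ψ hψ
    have h2 : eLpNorm ψ 2 (volume : Measure (ℝ × ℝ)) ^ 2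
        = ∫⁻ p, (‖ψ p‖₊ : ℝ≥0∞) ^ 2 ∂(volume : Measure (ℝ × ℝ)) := by
      rw [eLpNorm_eq_lintegral_rpow_enorm_toReal two_ne_zero ENNReal.ofNat_ne_top]
      rw [← ENNReal.rpow_natCast _ 2, ← ENNReal.rpow_mul]
      norm_num
      rfl
    rw [h2]
    exact hmain (fun p => (‖ψ p‖₊ : ℝ≥0∞) ^ 2)

end
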